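/- Let d be a square-free integer with d ≡ 1 (mod 4), and consider F₀ = ℚ(√-7, √(d√-7)) = ℚ(⁴√(-7d²)). Then F₀/ℚ is a degree 4 extension containing ℚ(√-7), and F₀/ℚ(√-7) is a quadratic extension ramified at the prime ((-1-√-7)/2) above 2. -/

import Mathlib

open NumberField Polynomial

private lemma adjoin_eq_top_IF {E L : Type*} [Field E] [Field L] [Algebra E L]
    {x : L} (hx : IsIntegral E x) (h : Algebra.adjoin E {x} = ⊤) :
    IntermediateField.adjoin E {x} = ⊤ := by
  apply IntermediateField.toSubalgebra_injective
  rw [IntermediateField.adjoin_simple_toSubalgebra_of_isAlgebraic hx.isAlgebraic, h,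
    IntermediateField.top_toSubalgebra]

private lemma finrank_eq_natDegree_minpoly' {E L : Type*} [Field E] [Field L] [Algebra E L]
    {x : L} (hx : IsIntegral E x) (h : Algebra.adjoin E {x} = ⊤) :
    Module.finrank E L = (minpoly E x).natDegree := by
  rw [← IntermediateField.adjoin.finrank hx, adjoin_eq_top_IF hx h,
    IntermediateField.finrank_top']

private lemma norm_eq_coeff_zero' {E L : Type*} [Field E] [Field L] [Algebra E L]
    {x : L} (hx : IsIntegral E x) (h : Algebra.adjoin E {x} = ⊤) :
    Algebra.norm E x = (-1) ^ (minpoly E x).natDegree * (minpoly E x).coeff 0 := by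
  let e : (Algebra.adjoin E ({x} : Set L)) ≃ₐ[E] L :=
    (Subalgebra.equivOfEq _ _ h).trans Subalgebra.topEquiv
  let pb := (Algebra.adjoin.powerBasis hx).map e
  have h1 : pb.gen = x := by
    simp [pb, e, PowerBasis.map_gen, Algebra.adjoin.powerBasis_gen]
  have h2 : pb.dim = (minpoly E x).natDegree := by
    simp [pb, PowerBasis.map_dim, Algebra.adjoin.powerBasis_dim]
  have h3 := Algebra.PowerBasis.norm_gen_eq_coeff_zero_minpoly pb
  rw [h1, h2] at h3
  exact h3

private lemma not_isSquare_seven : ¬ IsSquare (7 : ℤ) := by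
  rintro ⟨r, hr⟩
  have h1 : -3 < r := by nlinarith
  have h2 : r < 3 := by nlinarith
  interval_cases r <;> omega

theorem stmt_19 (d : ℤ) (hsf : Squarefree d) (hd4 : d % 4 = 1) (hd7 : ¬ (7 : ℤ) ∣ d)
    (K : Type*) [Field K] [NumberField K]
    (s : K) (hs : s ^ 2 = -7) (hKgen : Algebra.adjoin ℚ {s} = ⊤)
    (F₀ : Type*) [Field F₀] [NumberField F₀] [Algebra K F₀]
    (α : F₀) (hα : α ^ 2 = (d : F₀) * algebraMap K F₀ s)
    (hFgen : Algebra.adjoin K {α} = ⊤)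
    (γ : 𝓞 K) (hγ : (γ : K) * 2 = -1 - s) :
    Module.finrank ℚ F₀ = 4 ∧
    Module.finrank K F₀ = 2 ∧
    (∃ t : F₀, t ^ 2 = -7) ∧
    ∃ 𝔓 : Ideal (𝓞 F₀), 𝔓.IsMaximal ∧
      Ideal.map (algebraMap (𝓞 K) (𝓞 F₀)) (Ideal.span {γ}) = 𝔓 ^ 2 := by
  -- basic tower
  have halg : algebraMap ℚ F₀ = (algebraMap K F₀).comp (algebraMap ℚ K) := by
    refine RingHom.ext fun q => ?_
    rw [RingHom.comp_apply, eq_ratCast (algebraMap ℚ F₀), eq_ratCast (algebraMap ℚ K),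
      map_ratCast]
  haveI htow : IsScalarTower ℚ K F₀ := IsScalarTower.of_algebraMap_eq' halg
  have hd0 : (d : ℚ) ≠ 0 := Int.cast_ne_zero.mpr hsf.ne_zero
  obtain ⟨k, hk⟩ : ∃ k : ℤ, d = 4 * k + 1 := ⟨(d - 1) / 4, by omega⟩
  -- degree of K over ℚ
  have hs_int : IsIntegral ℚ s := IsIntegral.of_finite ℚ s
  have hirr_s : Irreducible (X ^ 2 - C (-7 : ℚ)) :=
    X_pow_sub_C_irreducible_of_prime Nat.prime_two (fun b hb => by nlinarith [sq_nonneg b])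
  have hmin_s : minpoly ℚ s = X ^ 2 - C (-7 : ℚ) := by
    symm
    refine minpoly.eq_of_irreducible_of_monic hirr_s ?_ (monic_X_pow_sub_C _ two_ne_zero)
    simp [hs]
  have finrankK : Module.finrank ℚ K = 2 := by
    rw [finrank_eq_natDegree_minpoly' hs_int hKgen, hmin_s, natDegree_X_pow_sub_C]
  have hNs : Algebra.norm ℚ s = 7 := by
    rw [norm_eq_coeff_zero' hs_int hKgen, hmin_s, natDegree_X_pow_sub_C]
    norm_num
  -- d*s is not a square in K
  have hnsq : ∀ b : K, b ^ 2 ≠ (d : K) * s := by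
    intro b hb
    have hdK : ((d : ℤ) : K) = algebraMap ℚ K ((d : ℤ) : ℚ) := (map_intCast _ d).symm
    have hNd : Algebra.norm ℚ ((d : ℤ) : K) = (d : ℚ) ^ 2 := by
      rw [hdK, Algebra.norm_algebraMap, finrankK]
    have hN : (Algebra.norm ℚ b) ^ 2 = (d : ℚ) ^ 2 * 7 := by
      have h := congrArg (Algebra.norm ℚ) hb
      rwa [map_pow, map_mul, hNs, hNd] at h
    have h7 : IsSquare ((7 : ℤ) : ℚ) := by
      refine ⟨Algebra.norm ℚ b / (d : ℚ), ?_⟩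
      rw [div_mul_div_comm, eq_div_iff (mul_ne_zero hd0 hd0)]
      push_cast
      linear_combination -hN
    rw [Rat.isSquare_intCast_iff] at h7
    exact not_isSquare_seven h7
  -- degree of F₀ over K
  have hα_int : IsIntegral K α := IsIntegral.of_finite K α
  have hirr_α : Irreducible (X ^ 2 - C ((d : K) * s)) :=
    X_pow_sub_C_irreducible_of_prime Nat.prime_two hnsq
  have hmin_α : minpoly K α = X ^ 2 - C ((d : K) * s) := by
    symm
    refine minpoly.eq_of_irreducible_of_monic hirr_α ?_ (monic_X_pow_sub_C _ two_ne_zero)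
    simp only [map_sub, map_pow, aeval_X, aeval_C, map_mul, map_intCast, hα]
    ring
  have finrankKF : Module.finrank K F₀ = 2 := by
    rw [finrank_eq_natDegree_minpoly' hα_int hFgen, hmin_α, natDegree_X_pow_sub_C]
  have finrank4 : Module.finrank ℚ F₀ = 4 := by
    rw [← Module.finrank_mul_finrank ℚ K F₀, finrankK, finrankKF]
  refine ⟨finrank4, finrankKF, ⟨algebraMap K F₀ s, by rw [← map_pow, hs, map_neg]; norm_num [map_ofNat]⟩, ?_⟩
  -- now the ramification part
  -- relation for γ in K
  have hγK : (γ : K) ^ 2 + (γ : K) + 2 = 0 := by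
    linear_combination (1/4 : K) * hs - (1/4 : K) * (s - 1 - 2 * (γ : K)) * hγ
  -- γ generates K
  have hγgen : Algebra.adjoin ℚ {((γ : K))} = ⊤ := by
    rw [eq_top_iff, ← hKgen]
    apply Algebra.adjoin_le
    intro x hx
    rw [Set.mem_singleton_iff] at hx
    rw [hx, show s = -1 - 2 * (γ : K) by linear_combination hγ, SetLike.mem_coe]
    refine sub_mem (neg_mem (one_mem _)) (mul_mem ?_ (Algebra.self_mem_adjoin_singleton ℚ _))
    exact ofNat_mem _ 2
  have hγ_int : IsIntegral ℚ ((γ : K)) := IsIntegral.of_finite ℚ _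
  -- minpoly of γ
  have hpmonic : (X ^ 2 + X + C (2 : ℚ)).Monic := by monicity!
  have hpdeg : (X ^ 2 + X + C (2 : ℚ)).natDegree = 2 := by compute_degree!
  have hmin_γ : minpoly ℚ ((γ : K)) = X ^ 2 + X + C (2 : ℚ) := by
    have hdvd : minpoly ℚ ((γ : K)) ∣ X ^ 2 + X + C (2 : ℚ) := by
      apply minpoly.dvd
      simp only [map_add, map_pow, aeval_X, aeval_C]
      norm_num
      linear_combination hγK
    have hdeg : (minpoly ℚ ((γ : K))).natDegree = 2 := by
      rw [← finrank_eq_natDegree_minpoly' hγ_int hγgen, finrankK]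
    exact Polynomial.eq_of_monic_of_associated (minpoly.monic hγ_int) hpmonic
      (associated_of_dvd_of_natDegree_le hdvd hpmonic.ne_zero (by rw [hpdeg, hdeg]))
  have hNγ : Algebra.norm ℚ ((γ : K)) = 2 := by
    rw [norm_eq_coeff_zero' hγ_int hγgen, hmin_γ, hpdeg]
    norm_num
  -- norm of γ in F₀
  have hNgF : Algebra.norm ℚ ((algebraMap K F₀) (γ : K)) = 4 := by
    have h1 : Algebra.norm K ((algebraMap K F₀) (γ : K)) = (γ : K) ^ 2 := by
      rw [Algebra.norm_algebraMap, finrankKF]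
    rw [← Algebra.norm_norm (R := ℚ) (S := K), h1, map_pow, hNγ]
    norm_num
  -- integral element α
  have hsF_int : IsIntegral ℤ (algebraMap K F₀ s) := by
    refine map_isIntegral_int (algebraMap K F₀) ⟨X ^ 2 - C (-7 : ℤ), monic_X_pow_sub_C _ two_ne_zero, ?_⟩
    simp [hs]
  have hdF_int : IsIntegral ℤ ((d : F₀)) := by
    have : ((d : ℤ) : F₀) = algebraMap ℤ F₀ d := by simp
    rw [this]
    exact isIntegral_algebraMap
  have hα_intZ : IsIntegral ℤ α := by
    refine IsIntegral.of_pow (n := 2) two_pos ?_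
    rw [hα]
    exact hdF_int.mul hsF_int
  -- elements of 𝓞 F₀
  set gO : 𝓞 F₀ := algebraMap (𝓞 K) (𝓞 F₀) γ with hgO_def
  set aO : 𝓞 F₀ := ⟨α, hα_intZ⟩ with haO_def
  have hcg : algebraMap (𝓞 F₀) F₀ gO = algebraMap K F₀ (γ : K) := rfl
  have hca : algebraMap (𝓞 F₀) F₀ aO = α := rfl
  -- key F₀-level relations
  set gF : F₀ := algebraMap K F₀ (γ : K) with hgF_def
  have hg2 : gF ^ 2 + gF + 2 = 0 := by
    have h := congrArg (algebraMap K F₀) hγK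
    simpa [hgF_def, map_ofNat] using h
  have h1' : gF * 2 = -1 - algebraMap K F₀ s := by
    have h := congrArg (algebraMap K F₀) hγ
    simpa [hgF_def, map_ofNat] using h
  have ha2 : α ^ 2 + (d : F₀) + 2 * (d : F₀) * gF = 0 := by
    linear_combination hα + (d : F₀) * h1'
  have hd2 : (d : F₀) = 4 * (k : F₀) + 1 := by exact_mod_cast congrArg (Int.cast : ℤ → F₀) hk
  -- the ideal J
  set o1 : 𝓞 F₀ := 1 + aO with ho1_def
  set J : Ideal (𝓞 F₀) := Ideal.span {gO, o1} with hJ_def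
  have hmem_g : gO ∈ J := Ideal.subset_span (Set.mem_insert _ _)
  have hmem_o : o1 ∈ J := Ideal.subset_span (Set.mem_insert_of_mem _ rfl)
  -- the two key 𝓞 F₀ identities
  have hdvd : o1 * o1 = gO * ((gO + 1) * (2 * (k : 𝓞 F₀) - aO + (d : 𝓞 F₀) * gO)) := by
    apply NumberField.RingOfIntegers.ext
    rw [ho1_def]
    push_cast
    simp only [map_mul, map_add, map_sub, map_one, map_intCast, map_ofNat, hca, hcg]
    linear_combination ha2 + (α - 2 * (k : F₀) - gF * (d : F₀)) * hg2 - hd2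
  have hcomb : gO = (2 * (d : 𝓞 F₀) - 1 + 3 * (k : 𝓞 F₀) * (gO - 1) - o1) * (gO * gO)
      - gO * o1 - o1 * o1 := by
    apply NumberField.RingOfIntegers.ext
    rw [ho1_def]
    push_cast
    simp only [map_mul, map_add, map_sub, map_one, map_intCast, map_ofNat, hca, hcg]
    linear_combination ha2 + (2 + 6 * (k : F₀) - 2 * (d : F₀) - 3 * gF * (k : F₀) + α) * hg2
      + 3 * hd2
  -- J^2 = (gO)
  have hJ2 : J ^ 2 = Ideal.span {gO} := by
    rw [pow_two]
    apply le_antisymm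
    · rw [Ideal.mul_le]
      intro r hr t ht
      rw [hJ_def, Ideal.mem_span_pair] at hr ht
      obtain ⟨u1, v1, h1⟩ := hr
      obtain ⟨u2, v2, h2⟩ := ht
      rw [Ideal.mem_span_singleton]
      refine ⟨u1 * u2 * gO + u1 * v2 * o1 + v1 * u2 * o1
        + v1 * v2 * ((gO + 1) * (2 * (k : 𝓞 F₀) - aO + (d : 𝓞 F₀) * gO)), ?_⟩
      rw [← h1, ← h2]
      linear_combination (v1 * v2) * hdvd
    · rw [Ideal.span_singleton_le_iff_mem, hcomb]
      exact sub_mem (sub_mem (Ideal.mul_mem_left _ _ (Ideal.mul_mem_mul hmem_g hmem_g))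
        (Ideal.mul_mem_mul hmem_g hmem_o)) (Ideal.mul_mem_mul hmem_o hmem_o)
  -- absolute norms
  have hNgO : Algebra.norm ℤ gO = 4 := by
    have h := Algebra.coe_norm_int gO
    rw [show ((gO : F₀)) = algebraMap K F₀ (γ : K) from rfl, hNgF] at h
    exact_mod_cast h
  have habs : Ideal.absNorm (Ideal.span {gO}) = 4 := by
    rw [Ideal.absNorm_span_singleton, hNgO]
    rfl
  have habsJ : Ideal.absNorm J = 2 := by
    have h : Ideal.absNorm J ^ 2 = 2 ^ 2 := by
      rw [← map_pow, hJ2, habs]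
      norm_num
    exact Nat.pow_left_injective (by norm_num) h
  have hprime : J.IsPrime := Ideal.isPrime_of_irreducible_absNorm
    (by rw [habsJ]; exact Nat.prime_iff.mp Nat.prime_two |>.irreducible)
  have hJne : J ≠ ⊥ := by
    intro hbot
    rw [hbot, Ideal.absNorm_bot] at habsJ
    omega
  have hmax : J.IsMaximal := Ideal.IsPrime.isMaximal hprime hJne
  refine ⟨J, hmax, ?_⟩
  rw [Ideal.map_span, Set.image_singleton, hJ2]
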